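/- Let α ∈ ℝ and let a, b be nonzero complex numbers. A number t ∈ ℂ is an eigenvalue of the half-line operator H₀⁺ on ℓ²(ℤ₊;ℂ²) (i.e., there exists u ≠ 0 in ℓ²(ℤ₊;ℂ²) with H₀⁺u = t·u) if and only if |b| > |a| and t = −α. -/

import Mathlib

open Complex Filter Topology

lemma coord_le_norm (x : EuclideanSpace ℂ (Fin 2)) (i : Fin 2) : ‖x i‖ ≤ ‖x‖ := by
  rw [EuclideanSpace.norm_eq]
  rw [show ‖x i‖ = Real.sqrt (‖x i‖ ^ 2) by rw [Real.sqrt_sq (norm_nonneg _)]]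
  apply Real.sqrt_le_sqrt
  exact Finset.single_le_sum (f := fun j => ‖x j‖ ^ 2)
    (fun j _ => sq_nonneg _) (Finset.mem_univ i)

lemma coord_tendsto (u : lp (fun _ : ℕ => EuclideanSpace ℂ (Fin 2)) 2) (i : Fin 2) :
    Tendsto (fun n => u n i) atTop (𝓝 0) := by
  have hs : Summable fun n => ‖u n‖ ^ ((2 : ENNReal)).toReal := (lp.memℓp u).summable (by norm_num)
  have h2 : Tendsto (fun n => ‖u n‖ ^ (2:ℝ)) atTop (𝓝 0) := by
    simpa using hs.tendsto_atTop_zero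
  have h3 : Tendsto (fun n => ‖u n‖) atTop (𝓝 0) := by
    have := (Real.continuous_sqrt.tendsto' 0 0 (by simp)).comp h2
    refine this.congr fun n => ?_
    simp only [Function.comp]
    rw [show (2:ℝ) = ((2:ℕ):ℝ) by norm_num, Real.rpow_natCast, Real.sqrt_sq (norm_nonneg _)]
  rw [tendsto_zero_iff_norm_tendsto_zero]
  exact squeeze_zero (fun n => norm_nonneg _) (fun n => coord_le_norm (u n) i) h3

lemma geom_zero {w : ℕ → ℂ} {r : ℂ} (hr : 1 ≤ ‖r‖) (hrec : ∀ n, w (n+1) = r * w n)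
    (hlim : Tendsto w atTop (𝓝 0)) : w 0 = 0 := by
  have hge : ∀ n, ‖w 0‖ ≤ ‖w n‖ := by
    intro n
    induction n with
    | zero => exact le_refl _
    | succ k ih =>
      rw [hrec k, norm_mul]
      calc ‖w 0‖ ≤ ‖w k‖ := ih
        _ ≤ ‖r‖ * ‖w k‖ := le_mul_of_one_le_left (norm_nonneg _) hr
  have h0 : ‖w 0‖ ≤ 0 := ge_of_tendsto' (by simpa using hlim.norm) hge
  have : ‖w 0‖ = 0 := le_antisymm h0 (norm_nonneg _)
  exact norm_eq_zero.mp this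

lemma lp_eq_zero (u : lp (fun _ : ℕ => EuclideanSpace ℂ (Fin 2)) 2)
    (h0 : ∀ n, u n 0 = 0) (h1 : ∀ n, u n 1 = 0) : u = 0 := by
  apply lp.ext
  funext n
  ext i
  fin_cases i
  · simpa using h0 n
  · simpa using h1 n

theorem H0plus_eigenvalue_iff (α : ℝ) (a b : ℂ) (ha : a ≠ 0) (hb : b ≠ 0)
    (H₀p : lp (fun _ : ℕ => EuclideanSpace ℂ (Fin 2)) 2 →L[ℂ]
           lp (fun _ : ℕ => EuclideanSpace ℂ (Fin 2)) 2)
    (hH₀p : ∀ (u : lp (fun _ : ℕ => EuclideanSpace ℂ (Fin 2)) 2) (n : ℕ),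
      H₀p u n 0 = (α : ℂ) * u n 0 + (starRingEnd ℂ) a * u n 1
          + (starRingEnd ℂ) b * u (n + 1) 1 ∧
      H₀p u n 1 = a * u n 0 + (if n = 0 then 0 else b * u (n - 1) 0)
          - (α : ℂ) * u n 1) :
    ∀ t : ℂ,
      (∃ u : lp (fun _ : ℕ => EuclideanSpace ℂ (Fin 2)) 2, u ≠ 0 ∧ H₀p u = t • u) ↔
        (‖a‖ < ‖b‖ ∧ t = -(α : ℂ)) := by
  have hca : (starRingEnd ℂ) a ≠ 0 := star_ne_zero.mpr ha
  have hcb : (starRingEnd ℂ) b ≠ 0 := star_ne_zero.mpr hb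
  intro t
  constructor
  · rintro ⟨u, hu0, hequ⟩
    have eig : ∀ n (i : Fin 2), H₀p u n i = t * u n i := by
      intro n i
      rw [hequ, lp.coeFn_smul, Pi.smul_apply, PiLp.smul_apply, smul_eq_mul]
    have e1 : ∀ n, (t - α) * u n 0
        = (starRingEnd ℂ) a * u n 1 + (starRingEnd ℂ) b * u (n+1) 1 := by
      intro n
      linear_combination (hH₀p u n).1 - eig n 0
    set v : ℕ → ℂ := fun n => Nat.casesOn n 0 (fun k => u k 0) with hv
    have hv0 : v 0 = 0 := rfl
    have hvs : ∀ k, v (k+1) = u k 0 := fun k => rfl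
    have e2 : ∀ n, (t + α) * u n 1 = a * v (n+1) + b * v n := by
      intro n
      have h2 := (hH₀p u n).2
      have e := eig n 1
      cases n with
      | zero =>
        rw [if_pos rfl] at h2
        rw [hvs, hv0]
        linear_combination h2 - e
      | succ k =>
        rw [if_neg (Nat.succ_ne_zero k)] at h2
        simp only [Nat.add_sub_cancel] at h2
        rw [hvs, hvs]
        linear_combination h2 - e
    have vlim : Tendsto v atTop (𝓝 0) := by
      rw [← tendsto_add_atTop_iff_nat 1]
      exact (coord_tendsto u 0).congr fun n => (hvs n).symm
    by_cases ht : t = -(α : ℂ)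
    · refine ⟨?_, ht⟩
      by_contra hab
      push_neg at hab
      have hta : t + α = 0 := by rw [ht]; ring
      have hvz : ∀ n, v n = 0 := by
        intro n
        induction n with
        | zero => exact hv0
        | succ k ih =>
          have h := e2 k
          rw [hta, zero_mul, ih, mul_zero, add_zero] at h
          exact (mul_eq_zero.mp h.symm).resolve_left ha
      have hu0n : ∀ n, u n 0 = 0 := fun n => by rw [← hvs n]; exact hvz (n+1)
      have hu1rec : ∀ n, u (n+1) 1 = (-(starRingEnd ℂ) a / (starRingEnd ℂ) b) * u n 1 := by
        intro n
        have h := e1 n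
        rw [hu0n n, mul_zero] at h
        field_simp
        first
        | linear_combination h
        | linear_combination -h
      have hr1 : 1 ≤ ‖-(starRingEnd ℂ) a / (starRingEnd ℂ) b‖ := by
        rw [norm_div, norm_neg, one_le_div (norm_pos_iff.mpr hcb)]
        simpa [RCLike.norm_conj] using hab
      have hu1z : u 0 1 = 0 := geom_zero hr1 hu1rec (coord_tendsto u 1)
      have hu1all : ∀ n, u n 1 = 0 := by
        intro n
        induction n with
        | zero => exact hu1z
        | succ k ih => rw [hu1rec k, ih, mul_zero]
      exact hu0 (lp_eq_zero u hu0n hu1all)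
    · exfalso
      have hs : t + α ≠ 0 := fun h => ht (eq_neg_of_add_eq_zero_left h)
      set c : ℂ := (t - α) * (t + α) - (starRingEnd ℂ) a * a - (starRingEnd ℂ) b * b with hc
      have hrec' : ∀ n, ((starRingEnd ℂ) b * a) * v (n+2)
          = c * v (n+1) - ((starRingEnd ℂ) a * b) * v n := by
        intro n
        have h1 := e1 n
        rw [← hvs n] at h1
        have h2 := e2 n
        have h3 := e2 (n+1)
        rw [show n+1+1 = n+2 from rfl] at h3
        linear_combination -((t + α) * h1 + (starRingEnd ℂ) a * h2 + (starRingEnd ℂ) b * h3)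
      set F : ℕ → ℂ := fun n => v (n+2) * v n - v (n+1) ^ 2 with hF
      have hFrec : ∀ n, ((starRingEnd ℂ) b * a) * F (n+1) = ((starRingEnd ℂ) a * b) * F n := by
        intro n
        have r1 := hrec' (n+1)
        rw [show n+1+2 = n+3 from rfl, show n+1+1 = n+2 from rfl] at r1
        have r0 := hrec' n
        have hF1 : F (n+1) = v (n+3) * v (n+1) - v (n+2) ^ 2 := rfl
        have hF0 : F n = v (n+2) * v n - v (n+1) ^ 2 := rfl
        rw [hF1, hF0]
        linear_combination v (n+1) * r1 - v (n+2) * r0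
      have hnorm_eq : ‖(starRingEnd ℂ) b * a‖ = ‖(starRingEnd ℂ) a * b‖ := by
        rw [norm_mul, norm_mul, RCLike.norm_conj, RCLike.norm_conj, mul_comm]
      have hp0 : ‖(starRingEnd ℂ) b * a‖ ≠ 0 :=
        norm_ne_zero_iff.mpr (mul_ne_zero hcb ha)
      have hFnorm : ∀ n, ‖F n‖ = ‖F 0‖ := by
        intro n
        induction n with
        | zero => rfl
        | succ k ih =>
          have h : ‖(starRingEnd ℂ) b * a‖ * ‖F (k+1)‖
              = ‖(starRingEnd ℂ) a * b‖ * ‖F k‖ := by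
            rw [← norm_mul, ← norm_mul, hFrec k]
          rw [← hnorm_eq] at h
          rw [mul_left_cancel₀ hp0 h, ih]
      have Flim : Tendsto F atTop (𝓝 0) := by
        have l2 : Tendsto (fun n => v (n+2)) atTop (𝓝 0) :=
          (tendsto_add_atTop_iff_nat 2).mpr vlim
        have l1 : Tendsto (fun n => v (n+1)) atTop (𝓝 0) :=
          (tendsto_add_atTop_iff_nat 1).mpr vlim
        have h : Tendsto (fun n => v (n+2) * v n - v (n+1) ^ 2) atTop (𝓝 (0 * 0 - 0 ^ 2)) :=
          Tendsto.sub (l2.mul vlim) (l1.pow 2)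
        simpa only [← hF, mul_zero, zero_mul, sub_zero, zero_pow, ne_eq, OfNat.ofNat_ne_zero,
          not_false_eq_true, zero_mul] using h
      have hF00 : ‖F 0‖ = 0 := by
        have h1 : Tendsto (fun n => ‖F n‖) atTop (𝓝 0) := by simpa using Flim.norm
        have h2 : Tendsto (fun n => ‖F n‖) atTop (𝓝 (‖F 0‖)) := by
          simp only [hFnorm]; exact tendsto_const_nhds
        exact tendsto_nhds_unique h2 h1
      have hv1 : v 1 = 0 := by
        have hF0' : F 0 = v 2 * v 0 - v 1 ^ 2 := rfl
        have h : F 0 = 0 := norm_eq_zero.mp hF00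
        rw [hF0', hv0, mul_zero, zero_sub, neg_eq_zero] at h
        exact pow_eq_zero_iff (n := 2) (by norm_num) |>.mp h
      have hvz : ∀ n, v n = 0 ∧ v (n+1) = 0 := by
        intro n
        induction n with
        | zero => exact ⟨hv0, hv1⟩
        | succ k ih =>
          refine ⟨ih.2, ?_⟩
          have h := hrec' k
          rw [show k+1+1 = k+2 from rfl]
          rw [ih.1, ih.2, mul_zero, mul_zero, zero_sub, neg_zero] at h
          exact (mul_eq_zero.mp h).resolve_left (mul_ne_zero hcb ha)
      have hu0all : ∀ n, u n 0 = 0 := fun n => by rw [← hvs n]; exact (hvz (n+1)).1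
      have hu1all : ∀ n, u n 1 = 0 := by
        intro n
        have h := e2 n
        rw [(hvz n).1, (hvz n).2, mul_zero, mul_zero, add_zero] at h
        exact (mul_eq_zero.mp h).resolve_left hs
      exact hu0 (lp_eq_zero u hu0all hu1all)
  · rintro ⟨hab, ht⟩
    set r : ℂ := -((starRingEnd ℂ) a / (starRingEnd ℂ) b) with hr
    have hrn : ‖r‖ < 1 := by
      rw [hr, norm_neg, norm_div, div_lt_one (norm_pos_iff.mpr hcb)]
      simpa [RCLike.norm_conj] using hab
    set f : ℕ → EuclideanSpace ℂ (Fin 2) := fun n => !₂[0, r ^ n] with hf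
    have hfn0 : ∀ n, f n 0 = 0 := fun n => rfl
    have hfn1 : ∀ n, f n 1 = r ^ n := fun n => rfl
    have hnormf : ∀ n, ‖f n‖ = ‖r‖ ^ n := by
      intro n
      rw [EuclideanSpace.norm_eq, Fin.sum_univ_two, hfn0, hfn1]
      simp [Real.sqrt_sq, norm_pow]
    have hmem : Memℓp f 2 := by
      apply memℓp_gen
      have hsum : Summable (fun n : ℕ => (‖r‖ ^ 2) ^ n) :=
        summable_geometric_of_lt_one (by positivity) (by nlinarith [norm_nonneg r])
      refine hsum.congr fun n => ?_
      rw [hnormf, show ((2 : ENNReal)).toReal = ((2:ℕ):ℝ) by norm_num, Real.rpow_natCast]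
      ring
    refine ⟨⟨f, hmem⟩, ?_, ?_⟩
    · intro h
      have h01 : f 0 1 = 0 := by
        have := congrArg (fun w : lp (fun _ : ℕ => EuclideanSpace ℂ (Fin 2)) 2 => w 0 1) h
        simpa using this
      rw [hfn1] at h01
      simp at h01
    · have hcoe : ∀ m (j : Fin 2),
          ((⟨f, hmem⟩ : lp (fun _ : ℕ => EuclideanSpace ℂ (Fin 2)) 2) m j) = f m j :=
        fun m j => rfl
      have hrhs : ∀ m (j : Fin 2),
          (⇑(t • (⟨f, hmem⟩ : lp (fun _ : ℕ => EuclideanSpace ℂ (Fin 2)) 2)) m j) = t * f m j := by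
        intro m j
        rw [lp.coeFn_smul]
        rfl
      have key0 : ∀ n : ℕ, (starRingEnd ℂ) a * r ^ n + (starRingEnd ℂ) b * r ^ (n+1) = 0 := by
        intro n
        have hbr : (starRingEnd ℂ) b * r = -(starRingEnd ℂ) a := by
          rw [hr]
          field_simp
        linear_combination r ^ n * hbr
      apply lp.ext
      funext n
      ext i
      fin_cases i
      · rw [show ((⟨0, by norm_num⟩ : Fin 2)) = (0 : Fin 2) from rfl]
        rw [(hH₀p ⟨f, hmem⟩ n).1, hrhs n 0]
        simp only [hcoe, hfn0, hfn1]
        linear_combination key0 n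
      · rw [show ((⟨1, by norm_num⟩ : Fin 2)) = (1 : Fin 2) from rfl]
        rw [(hH₀p ⟨f, hmem⟩ n).2, hrhs n 1]
        simp only [hcoe, hfn0, hfn1]
        rw [ht]
        split_ifs <;> ring
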